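/- Let n be a positive integer and let r be a real number with 0 < r < n. Then non(I^r_{n,σ-fin}) = non(N^r_n): the least cardinality of a subset of ℝⁿ that is not of σ-finite r-dimensional Hausdorff measure equals the least cardinality of a subset of ℝⁿ that is not H^r-null. -/

import Mathlib

open MeasureTheory Set
open scoped ENNReal MeasureTheory

noncomputable section


/-- A set `H ⊆ ℝⁿ` is of σ-finite `r`-dimensional Hausdorff measure if it is a countable
union of sets each of finite `r`-dimensional Hausdorff measure. -/
def SigmaFiniteHausdorff (n : ℕ) (r : ℝ) (H : Set (EuclideanSpace ℝ (Fin n))) : Prop :=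
  ∃ A : ℕ → Set (EuclideanSpace ℝ (Fin n)), H = ⋃ k, A k ∧ ∀ k, μH[r] (A k) < ⊤


/-- `nonOf J` is the least cardinality of a set that does not belong to `J`. -/
def nonOf {α : Type*} (J : Set (Set α)) : Cardinal :=
  sInf { c : Cardinal | ∃ H : Set α, H ∉ J ∧ Cardinal.mk H = c }

/- ### Auxiliary lemmas -/

/-- The pushforward of a finite atomless measure on `ℝ` under its cumulative distribution
function is the Lebesgue measure restricted to an interval. -/
lemma aux_cdf_map_eq (ν : Measure ℝ) [IsFiniteMeasure ν] [NullSingletonClass ν] :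
    Measure.map (fun x => (ν (Iic x)).toReal) ν
      = volume.restrict (Ioc 0 (ν univ).toReal) := by
  set c : ℝ := (ν univ).toReal with hc
  set F : ℝ → ℝ := fun x => (ν (Iic x)).toReal with hF
  have hFmono : Monotone F := fun a b hab =>
    ENNReal.toReal_mono (measure_ne_top ν _) (measure_mono (Iic_subset_Iic.2 hab))
  have hFmeas : Measurable F := hFmono.measurable
  have hF0 : ∀ x, 0 ≤ F x := fun x => ENNReal.toReal_nonneg
  have hFc : ∀ x, F x ≤ c := fun x =>
    ENNReal.toReal_mono (measure_ne_top ν _) (measure_mono (subset_univ _))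
  haveI : IsFiniteMeasure (Measure.map F ν) := by
    constructor
    rw [Measure.map_apply hFmeas MeasurableSet.univ]
    exact measure_lt_top ν _
  refine Measure.ext_of_Iic _ _ (fun y => ?_)
  rw [Measure.map_apply hFmeas measurableSet_Iic,
    Measure.restrict_apply measurableSet_Iic]
  have hset : Iic y ∩ Ioc 0 c = Ioc 0 (min y c) := by
    ext x; simp [and_comm, and_assoc, le_min_iff]; tauto
  rw [hset, Real.volume_Ioc]
  have key : ν (F ⁻¹' Iic y) = ENNReal.ofReal (min y c) := by
    rcases lt_or_ge y 0 with hy | hy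
    · have : F ⁻¹' Iic y = ∅ := by
        ext x; simp only [mem_preimage, mem_Iic, mem_empty_iff_false, iff_false, not_le]
        exact lt_of_lt_of_le hy (hF0 x)
      rw [this, measure_empty, eq_comm, ENNReal.ofReal_eq_zero]
      exact le_of_lt (lt_of_le_of_lt (min_le_left _ _) hy)
    · rcases le_or_gt c y with hcy | hyc
      · have : F ⁻¹' Iic y = univ := eq_univ_of_forall fun x => le_trans (hFc x) hcy
        rw [this, min_eq_right hcy, hc, ENNReal.ofReal_toReal (measure_ne_top ν _)]
      · rw [min_eq_left hyc.le]
        set E : Set ℝ := F ⁻¹' Iic y with hE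
        have hdc : ∀ ⦃s x : ℝ⦄, x ∈ E → s ≤ x → s ∈ E := fun s x hx hsx =>
          le_trans (hFmono hsx) hx
        rcases eq_empty_or_nonempty E with hEe | hEne
        · rcases eq_or_lt_of_le hy with hy0 | hy0
          · rw [hEe, measure_empty, ← hy0, ENNReal.ofReal_zero]
          · exfalso
            have hlim : Filter.Tendsto (fun m : ℕ => ν (Iic (-(m:ℝ)))) Filter.atTop
                (nhds (ν (⋂ m : ℕ, Iic (-(m:ℝ))))) := by
              apply tendsto_measure_iInter_atTop (fun m => measurableSet_Iic.nullMeasurableSet)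
              · intro a b hab
                exact Iic_subset_Iic.2 (neg_le_neg (Nat.cast_le.2 hab))
              · exact ⟨0, measure_ne_top ν _⟩
            have hint : (⋂ m : ℕ, Iic (-(m:ℝ))) = ∅ := by
              ext x
              simp only [mem_iInter, mem_Iic, mem_empty_iff_false, iff_false, not_forall, not_le]
              obtain ⟨m, hm⟩ := exists_nat_gt (-x)
              exact ⟨m, by linarith⟩
            rw [hint, measure_empty] at hlim
            have := hlim.eventually_lt_const (ENNReal.ofReal_pos.2 hy0)
            obtain ⟨m, hm⟩ := this.exists
            have hle : F (-(m:ℝ)) ≤ y := (ENNReal.toReal_lt_of_lt_ofReal hm).le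
            have hmemE : (-(m:ℝ)) ∈ E := hle
            rw [hEe] at hmemE
            exact notMem_empty _ hmemE
        · by_cases hbdd : BddAbove E
          · set u : ℝ := sSup E with hu
            have hIio : Iio u ⊆ E := by
              intro s hs
              obtain ⟨x, hxE, hsx⟩ := exists_lt_of_lt_csSup hEne hs
              exact hdc hxE hsx.le
            have hEIic : E ⊆ Iic u := fun x hx => le_csSup hbdd hx
            have hIioIic : ν (Iio u) = ν (Iic u) :=
              measure_congr (Iio_ae_eq_Iic' (measure_singleton u))
            have hνE : ν E = ν (Iic u) := by
              refine le_antisymm (measure_mono hEIic) ?_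
              rw [← hIioIic]; exact measure_mono hIio
            rw [hνE]
            have hub : ν (Iic u) ≤ ENNReal.ofReal y := by
              rw [← hIioIic]
              have hun : Iio u = ⋃ m : ℕ, Iic (u - 1/(m+1)) := by
                ext x
                simp only [mem_Iio, mem_iUnion, mem_Iic]
                constructor
                · intro hx
                  obtain ⟨m, hm⟩ := exists_nat_one_div_lt (sub_pos.2 hx)
                  exact ⟨m, by push_cast at hm ⊢; linarith⟩
                · rintro ⟨m, hm⟩
                  have : (0:ℝ) < 1/(m+1) := by positivity
                  linarith
              rw [hun, Directed.measure_iUnion]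
              · refine iSup_le fun m => ?_
                have hmem' : (u - 1/(m+1)) ∈ E := hIio (by
                  simp only [mem_Iio]
                  have : (0:ℝ) < 1/(m+1) := by positivity
                  linarith)
                have : F (u - 1/(m+1)) ≤ y := hmem'
                exact ENNReal.le_ofReal_iff_toReal_le (measure_ne_top ν _) hy |>.2 this
              · apply Monotone.directed_le
                intro a b hab
                apply Iic_subset_Iic.2
                have : (1:ℝ)/(b+1) ≤ 1/(a+1) := by
                  apply one_div_le_one_div_of_le
                  · positivity
                  · push_cast
                    have : (a:ℝ) ≤ b := Nat.cast_le.2 hab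
                    linarith
                linarith
            have hlb : ENNReal.ofReal y ≤ ν (Iic u) := by
              have hiInter : (⋂ m : ℕ, Iic (u + 1/(m+1))) = Iic u := by
                ext x
                simp only [mem_iInter, mem_Iic]
                constructor
                · intro h
                  by_contra hx
                  push_neg at hx
                  obtain ⟨m, hm⟩ := exists_nat_one_div_lt (sub_pos.2 hx)
                  have := h m
                  push_cast at hm
                  linarith
                · intro h m
                  have : (0:ℝ) < 1/(m+1) := by positivity
                  linarith
              have hlim : Filter.Tendsto (fun m : ℕ => ν (Iic (u + 1/(m+1)))) Filter.atTop
                  (nhds (ν (⋂ m : ℕ, Iic (u + 1/(m+1))))) := by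
                apply tendsto_measure_iInter_atTop (fun m => measurableSet_Iic.nullMeasurableSet)
                · intro a b hab
                  apply Iic_subset_Iic.2
                  have : (1:ℝ)/(b+1) ≤ 1/(a+1) := by
                    apply one_div_le_one_div_of_le
                    · positivity
                    · push_cast
                      have : (a:ℝ) ≤ b := Nat.cast_le.2 hab
                      linarith
                  linarith
                · exact ⟨0, measure_ne_top ν _⟩
              rw [hiInter] at hlim
              refine ge_of_tendsto hlim (Filter.Eventually.of_forall fun m => ?_)
              have hnot : (u + 1/(m+1)) ∉ E := by
                intro hmem'
                have := le_csSup hbdd hmem'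
                have h1 : (0:ℝ) < 1/(m+1) := by positivity
                rw [← hu] at this
                linarith
              have : y < F (u + 1/(m+1)) := by
                by_contra h
                push_neg at h
                exact hnot h
              exact (ENNReal.ofReal_lt_iff_lt_toReal hy (measure_ne_top ν _)).2 this |>.le
            exact le_antisymm hub hlb
          · exfalso
            have hEuniv : E = univ := by
              apply eq_univ_of_forall
              intro z
              obtain ⟨x, hxE, hzx⟩ := not_bddAbove_iff.1 hbdd z
              exact hdc hxE hzx.le
            have hall : ∀ x : ℝ, ν (Iic x) ≤ ENNReal.ofReal y := fun x =>
              ENNReal.le_ofReal_iff_toReal_le (measure_ne_top ν _) hy |>.2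
                (show x ∈ E from hEuniv.symm ▸ mem_univ x)
            have huniv : ν univ ≤ ENNReal.ofReal y :=
              le_of_tendsto (tendsto_measure_Iic_atTop ν) (Filter.Eventually.of_forall hall)
            have : c ≤ y := ENNReal.toReal_le_of_le_ofReal hy huniv
            linarith
  rw [key, sub_zero]

/-- If a set `S ⊆ ℝ` is not contained in any Lebesgue-null measurable set, then neither is
its `m`-fold product inside `Fin m → ℝ`. -/
lemma aux_pi_not_null (S : Set ℝ)
    (hS : ∀ N : Set ℝ, MeasurableSet N → volume N = 0 → ¬ S ⊆ N) :
    ∀ m : ℕ, ∀ N : Set (Fin m → ℝ), MeasurableSet N → volume N = 0 →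
      ¬ (Set.univ.pi (fun _ : Fin m => S) ⊆ N) := by
  intro m
  induction m with
  | zero =>
    intro N _ hN0 hsub
    have h1 : (univ : Set (Fin 0 → ℝ)) ⊆ N := by
      intro f _
      exact hsub (by simp [Set.mem_pi])
    have h2 : volume (univ : Set (Fin 0 → ℝ)) = 0 := measure_mono_null h1 hN0
    rw [volume_pi, Measure.pi_univ] at h2
    simp at h2
  | succ m ih =>
    intro N hN hN0 hsub
    set φ := MeasurableEquiv.piFinSuccAbove (fun _ : Fin (m+1) => ℝ) 0 with hφ
    have hmp : MeasurePreserving φ volume volume :=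
      volume_preserving_piFinSuccAbove (fun _ : Fin (m+1) => ℝ) 0
    set N' : Set (ℝ × (Fin m → ℝ)) := φ.symm ⁻¹' N with hN'
    have hN'meas : MeasurableSet N' := φ.symm.measurable hN
    have hN'0 : volume N' = 0 := by
      rw [(MeasurePreserving.symm φ hmp).measure_preimage hN.nullMeasurableSet]
      exact hN0
    have hsub' : S ×ˢ (Set.univ.pi (fun _ : Fin m => S)) ⊆ N' := by
      rintro ⟨x, g⟩ ⟨hx, hg⟩
      have hmem : φ.symm (x, g) ∈ Set.univ.pi (fun _ : Fin (m+1) => S) := by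
        intro i _
        have hsymm : φ.symm (x, g) = Fin.cons x g := by
          simp [hφ, MeasurableEquiv.piFinSuccAbove]
          rfl
        rw [hsymm]
        rcases Fin.eq_zero_or_eq_succ i with hi | ⟨j, hj⟩
        · subst hi; rw [Fin.cons_zero]; exact hx
        · subst hj
          rw [Fin.cons_succ]
          exact hg j (mem_univ j)
      exact hsub hmem
    rw [Measure.volume_eq_prod, Measure.measure_prod_null hN'meas] at hN'0
    rw [Filter.EventuallyEq, ae_iff] at hN'0
    set Z := {x : ℝ | volume (Prod.mk x ⁻¹' N') ≠ 0} with hZ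
    have hZ0 : volume Z = 0 := by
      convert hN'0 using 2
      rfl
    set W := toMeasurable volume Z with hW
    have hW0 : volume W = 0 := by rw [measure_toMeasurable]; exact hZ0
    obtain ⟨x, hxS, hxW⟩ := not_subset.1 (hS W (measurableSet_toMeasurable _ _) hW0)
    have hxZ : x ∉ Z := fun h => hxW (subset_toMeasurable _ _ h)
    have hslice0 : volume (Prod.mk x ⁻¹' N') = 0 := by
      by_contra h
      exact hxZ h
    have hslicemeas : MeasurableSet (Prod.mk x ⁻¹' N') :=
      hN'meas.preimage measurable_prodMk_left
    refine ih _ hslicemeas hslice0 ?_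
    intro g hg
    exact hsub' ⟨hxS, hg⟩

/-- A set that is null for the `n`-dimensional Hausdorff measure on `ℝⁿ` is Lebesgue-null. -/
lemma aux_volume_null_of_hausdorff_null {n : ℕ} {A : Set (EuclideanSpace ℝ (Fin n))}
    (h : μH[(n:ℝ)] A = 0) : volume A = 0 := by
  have hfr : ((Module.finrank ℝ (EuclideanSpace ℝ (Fin n)) : ℕ) : ℝ) = (n : ℝ) := by
    rw [finrank_euclideanSpace_fin]
  rw [← hfr] at h
  have heq := Measure.isAddLeftInvariant_eq_smul
    (volume : Measure (EuclideanSpace ℝ (Fin n)))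
    (μH[(Module.finrank ℝ (EuclideanSpace ℝ (Fin n)) : ℝ)])
  calc volume A = (volume.addHaarScalarFactor
        μH[(Module.finrank ℝ (EuclideanSpace ℝ (Fin n)) : ℝ)] •
        μH[(Module.finrank ℝ (EuclideanSpace ℝ (Fin n)) : ℝ)]) A := by rw [← heq]
    _ = 0 := by rw [Measure.smul_apply, h, smul_zero]

/-- A set of σ-finite `H^r` measure in `ℝⁿ`, `r < n`, is Lebesgue-null. -/
lemma aux_sigmaFinite_volume_null {n : ℕ} {r : ℝ} (hrn : r < n)
    {H : Set (EuclideanSpace ℝ (Fin n))}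
    (h : SigmaFiniteHausdorff n r H) : volume H = 0 := by
  obtain ⟨A, hU, hfin⟩ := h
  rw [hU]
  refine measure_iUnion_null fun k => ?_
  set B := toMeasurable (μH[r] : Measure (EuclideanSpace ℝ (Fin n))) (A k) with hB
  have hBfin : μH[r] B < ⊤ := by
    rw [hB, measure_toMeasurable]
    exact hfin k
  have hBn : μH[(n:ℝ)] B = 0 := by
    rcases Measure.hausdorffMeasure_zero_or_top hrn B with h0 | htop
    · exact h0
    · exact absurd htop hBfin.ne
  exact measure_mono_null (subset_toMeasurable _ _) (aux_volume_null_of_hausdorff_null hBn)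

/-- An `H^r`-null set is of σ-finite `H^r` measure. -/
lemma aux_null_sigmaFinite {n : ℕ} {r : ℝ} {H : Set (EuclideanSpace ℝ (Fin n))}
    (h : μH[r] H = 0) : SigmaFiniteHausdorff n r H := by
  refine ⟨fun k => if k = 0 then H else ∅, ?_, fun k => ?_⟩
  · ext x
    simp only [mem_iUnion]
    constructor
    · intro hx
      exact ⟨0, by simpa using hx⟩
    · rintro ⟨k, hk⟩
      by_cases h0 : k = 0
      · simpa [h0] using hk
      · simp [h0] at hk
  · by_cases hk : k = 0 <;> simp [hk, h]

/-- The whole space is not of σ-finite `H^r` measure when `r < n`. -/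
lemma aux_univ_not_sigmaFinite {n : ℕ} {r : ℝ} (hrn : r < n) :
    ¬ SigmaFiniteHausdorff n r (univ : Set (EuclideanSpace ℝ (Fin n))) := by
  intro h
  have h0 : volume (univ : Set (EuclideanSpace ℝ (Fin n))) = 0 :=
    aux_sigmaFinite_volume_null hrn h
  exact (isOpen_univ.measure_ne_zero volume univ_nonempty) h0

/-- The whole space is not `H^r`-null when `r < n`. -/
lemma aux_univ_not_null {n : ℕ} {r : ℝ} (hrn : r < n) :
    μH[r] (univ : Set (EuclideanSpace ℝ (Fin n))) ≠ 0 :=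
  fun h => aux_univ_not_sigmaFinite hrn (aux_null_sigmaFinite h)

/-- The key transport lemma: from a non-`H^r`-null set one can construct a set of
no larger cardinality that is not of σ-finite `H^r` measure. -/
lemma aux_exists_not_sigmaFinite {n : ℕ} {r : ℝ} (hn : 1 ≤ n) (hr0 : 0 < r) (hrn : r < n)
    (H : Set (EuclideanSpace ℝ (Fin n))) (hH : μH[r] H ≠ 0) :
    ∃ T : Set (EuclideanSpace ℝ (Fin n)),
      ¬ SigmaFiniteHausdorff n r T ∧ Cardinal.mk T ≤ Cardinal.mk H := by
  classical
  by_cases hsf : SigmaFiniteHausdorff n r H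
  swap
  · exact ⟨H, hsf, le_refl _⟩
  obtain ⟨A, hU, hfin⟩ := hsf
  have hex : ∃ k, μH[r] (A k) ≠ 0 := by
    by_contra h
    push_neg at h
    exact hH (by rw [hU]; exact measure_iUnion_null h)
  obtain ⟨k, hk⟩ := hex
  have hA0H : A k ⊆ H := hU ▸ subset_iUnion A k
  have hfin0 : μH[r] (A k) < ⊤ := hfin k
  set B := toMeasurable (μH[r] : Measure (EuclideanSpace ℝ (Fin n))) (A k) with hBdef
  have hBmeas : MeasurableSet B := measurableSet_toMeasurable _ _
  have hBval : μH[r] B = μH[r] (A k) := measure_toMeasurable _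
  set μB := (μH[r] : Measure (EuclideanSpace ℝ (Fin n))).restrict B with hμB
  haveI : IsFiniteMeasure μB := by
    constructor
    rw [hμB, Measure.restrict_apply_univ, hBval]
    exact hfin0
  haveI : NullSingletonClass (μH[r] : Measure (EuclideanSpace ℝ (Fin n))) := Measure.noAtoms_hausdorff _ hr0
  haveI : NullSingletonClass μB := by rw [hμB]; infer_instance
  obtain ⟨g, hg⟩ := exists_measurableEmbedding_real (EuclideanSpace ℝ (Fin n))
  set ν := Measure.map g μB with hν
  haveI : IsFiniteMeasure ν := by
    constructor
    rw [hν, Measure.map_apply hg.measurable MeasurableSet.univ]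
    exact measure_lt_top _ _
  haveI : NullSingletonClass ν := by
    constructor
    intro x
    rw [hν, Measure.map_apply hg.measurable (measurableSet_singleton x)]
    refine Set.Subsingleton.measure_zero (fun a ha b hb => ?_) _
    exact hg.injective (ha.trans hb.symm)
  set F : ℝ → ℝ := fun x => (ν (Iic x)).toReal with hFdef
  have hFmono : Monotone F := fun a b hab =>
    ENNReal.toReal_mono (measure_ne_top ν _) (measure_mono (Iic_subset_Iic.2 hab))
  have hFmeas : Measurable F := hFmono.measurable
  have hpush : Measure.map F ν = volume.restrict (Ioc 0 (ν univ).toReal) := aux_cdf_map_eq ν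
  set S : Set ℝ := F '' (g '' (A k)) with hSdef
  have hSprop : ∀ N : Set ℝ, MeasurableSet N → volume N = 0 → ¬ S ⊆ N := by
    intro N hNmeas hN0 hsub
    have h1 : A k ⊆ (fun x => F (g x)) ⁻¹' N := fun x hx => hsub ⟨g x, ⟨x, hx, rfl⟩, rfl⟩
    have h2 : μB ((fun x => F (g x)) ⁻¹' N) = 0 := by
      have heq : (fun x => F (g x)) ⁻¹' N = g ⁻¹' (F ⁻¹' N) := rfl
      rw [heq, ← Measure.map_apply hg.measurable (hFmeas hNmeas), ← hν,
        ← Measure.map_apply hFmeas hNmeas, hpush, Measure.restrict_apply hNmeas]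
      exact measure_mono_null inter_subset_left hN0
    have h3 : μB (A k) = μH[r] (A k) := by
      rw [hμB, Measure.restrict_apply' hBmeas,
        inter_eq_left.2 (subset_toMeasurable _ _)]
    exact hk (by rw [← h3]; exact measure_mono_null h1 h2)
  set e := (MeasurableEquiv.toLp 2 (Fin n → ℝ)).symm with he
  set P : Set (Fin n → ℝ) := Set.univ.pi (fun _ : Fin n => S) with hPdef
  set T : Set (EuclideanSpace ℝ (Fin n)) := e.symm '' P with hTdef
  have hPT : P = e.symm ⁻¹' T ∩ P := by
    rw [inter_eq_right.2]
    intro p hp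
    exact ⟨p, hp, rfl⟩
  refine ⟨T, ?_, ?_⟩
  · intro hTsf
    have hT0 : volume T = 0 := aux_sigmaFinite_volume_null hrn hTsf
    set M := toMeasurable (volume : Measure (EuclideanSpace ℝ (Fin n))) T with hM
    have hMmeas : MeasurableSet M := measurableSet_toMeasurable _ _
    have hM0 : volume M = 0 := by rw [hM, measure_toMeasurable]; exact hT0
    have hmp : MeasurePreserving e volume volume :=
      EuclideanSpace.volume_preserving_symm_measurableEquiv_toLp (Fin n)
    have hpre0 : volume (e.symm ⁻¹' M) = 0 := by
      rw [(MeasurePreserving.symm e hmp).measure_preimage hMmeas.nullMeasurableSet]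
      exact hM0
    refine aux_pi_not_null S hSprop n (e.symm ⁻¹' M) (e.symm.measurable hMmeas) hpre0 ?_
    intro p hp
    exact subset_toMeasurable _ _ (⟨p, hp, rfl⟩ : e.symm p ∈ T)
  · have hmkT : Cardinal.mk T ≤ Cardinal.mk P := Cardinal.mk_image_le
    have hmkP : Cardinal.mk P = Cardinal.mk S ^ (n : ℕ) := by
      have e1 : P ≃ (∀ _ : Fin n, S) := Equiv.Set.univPi (fun _ : Fin n => S)
      rw [Cardinal.mk_congr e1, ← Cardinal.power_def, Cardinal.mk_fin,
        Cardinal.power_natCast]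
    have hmkS : Cardinal.mk S ≤ Cardinal.mk H :=
      le_trans Cardinal.mk_image_le (le_trans Cardinal.mk_image_le
        (Cardinal.mk_le_mk_of_subset hA0H))
    have hinf : Cardinal.aleph0 ≤ Cardinal.mk H := by
      by_contra hlt
      push_neg at hlt
      have : H.Countable := by
        rw [← Cardinal.le_aleph0_iff_set_countable]
        exact hlt.le
      exact hH (this.measure_zero _)
    calc Cardinal.mk T ≤ Cardinal.mk S ^ (n : ℕ) := hmkP ▸ hmkT
      _ ≤ Cardinal.mk H ^ (n : ℕ) := by
          exact pow_le_pow_left₀ (Cardinal.zero_le _) hmkS n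
      _ = Cardinal.mk H := Cardinal.power_nat_eq hinf hn

/-- `non(I^r_{n,σ-fin}) = non(N^r_n)`. -/
theorem stmt6 (n : ℕ) (r : ℝ) (hn : 1 ≤ n) (hr0 : 0 < r) (hrn : r < n) :
    nonOf {H : Set (EuclideanSpace ℝ (Fin n)) | SigmaFiniteHausdorff n r H} =
      nonOf {H : Set (EuclideanSpace ℝ (Fin n)) | μH[r] H = 0} := by
  have hrn' : r < (n : ℝ) := hrn
  set SS := { c : Cardinal | ∃ H : Set (EuclideanSpace ℝ (Fin n)),
    H ∉ {H : Set (EuclideanSpace ℝ (Fin n)) | SigmaFiniteHausdorff n r H} ∧ Cardinal.mk H = c }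
    with hSS
  set NN := { c : Cardinal | ∃ H : Set (EuclideanSpace ℝ (Fin n)),
    H ∉ {H : Set (EuclideanSpace ℝ (Fin n)) | μH[r] H = 0} ∧ Cardinal.mk H = c }
    with hNN
  have hSSne : SS.Nonempty :=
    ⟨Cardinal.mk (univ : Set (EuclideanSpace ℝ (Fin n))),
      univ, aux_univ_not_sigmaFinite hrn', rfl⟩
  have hNNne : NN.Nonempty :=
    ⟨Cardinal.mk (univ : Set (EuclideanSpace ℝ (Fin n))),
      univ, aux_univ_not_null hrn', rfl⟩
  refine le_antisymm ?_ ?_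
  · -- non(σ-fin) ≤ non(null)
    obtain ⟨H, hH, hmk⟩ := csInf_mem hNNne
    obtain ⟨T, hT, hle⟩ := aux_exists_not_sigmaFinite hn hr0 hrn' H hH
    calc nonOf {H : Set (EuclideanSpace ℝ (Fin n)) | SigmaFiniteHausdorff n r H}
        ≤ Cardinal.mk T := csInf_le (OrderBot.bddBelow _) ⟨T, hT, rfl⟩
      _ ≤ Cardinal.mk H := hle
      _ = nonOf {H : Set (EuclideanSpace ℝ (Fin n)) | μH[r] H = 0} := hmk
  · -- non(null) ≤ non(σ-fin)
    refine csInf_le_csInf (OrderBot.bddBelow _) hSSne ?_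
    rintro c ⟨H, hH, hmk⟩
    exact ⟨H, fun h0 => hH (aux_null_sigmaFinite h0), hmk⟩
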